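/- arXiv:1302.2186 — 6 statements merged into one kernel-verified Lean document; each statement's English description precedes it below -/
import Mathlib

section
/- Let H : ℝ → ℝ be continuous and strictly positive on (-1, ∞), and suppose x ↦ 1/H(x) is integrable on (z, ∞) for every z > -1; define H_p(z) = (1+z)⁻¹ ∫_z^∞ dx/H(x). Let z : ℝ → ℝ be a function (the redshift as a function of cosmic time) with z(t) > -1 for all t, satisfying the differential equation z'(t) = -(1 + z(t))·H(z(t)). Then for every t, the function t ↦ H_p(z(t)) is differentiable at t with derivative d/dt [H_p(z(t))] = H_p(z(t))·H(z(t)) + 1. -/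
open MeasureTheory Filter Set

lemma Ioi_split (f : ℝ → ℝ) {a u : ℝ}
    (hfa : IntegrableOn f (Set.Ioi a)) (hfu : IntegrableOn f (Set.Ioi u)) :
    ∫ x in Set.Ioi u, f x = (∫ x in Set.Ioi a, f x) - ∫ x in a..u, f x := by
  rcases le_total a u with h | h
  · rw [intervalIntegral.integral_of_le h]
    have hun : Set.Ioc a u ∪ Set.Ioi u = Set.Ioi a := Set.Ioc_union_Ioi_eq_Ioi h
    have hdis : Disjoint (Set.Ioc a u) (Set.Ioi u) := by
      simp only [Set.disjoint_left, Set.mem_Ioc, Set.mem_Ioi]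
      rintro x ⟨_, hx⟩ hx'
      linarith
    have := MeasureTheory.setIntegral_union hdis measurableSet_Ioi
      (hfa.mono_set (by rw [← hun]; exact Set.subset_union_left))
      hfu (f := f) (μ := volume)
    rw [hun] at this
    linarith [this]
  · rw [intervalIntegral.integral_symm, intervalIntegral.integral_of_le h]
    have hun : Set.Ioc u a ∪ Set.Ioi a = Set.Ioi u := Set.Ioc_union_Ioi_eq_Ioi h
    have hdis : Disjoint (Set.Ioc u a) (Set.Ioi a) := by
      simp only [Set.disjoint_left, Set.mem_Ioc, Set.mem_Ioi]
      rintro x ⟨_, hx⟩ hx'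
      linarith
    have := MeasureTheory.setIntegral_union hdis measurableSet_Ioi
      (hfu.mono_set (by rw [← hun]; exact Set.subset_union_left))
      hfa (f := f) (μ := volume)
    rw [hun] at this
    linarith [this]

/-- Velocity of the particle horizon with respect to cosmic time:
if the redshift evolves by `dz/dt = -(1+z)H(z)`, then
`d/dt [H_p(z(t))] = H_p(z(t))·H(z(t)) + 1`. -/
theorem particleHorizon_velocity
    (H : ℝ → ℝ)
    (hHcont : ContinuousOn H (Set.Ioi (-1)))
    (hHpos : ∀ x ∈ Set.Ioi (-1 : ℝ), 0 < H x)
    (hint : ∀ z : ℝ, -1 < z → IntegrableOn (fun x => 1 / H x) (Set.Ioi z))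
    (Hp : ℝ → ℝ)
    (hHp : ∀ z : ℝ, Hp z = (1 + z)⁻¹ * ∫ x in Set.Ioi z, 1 / H x)
    (z : ℝ → ℝ) (hz : ∀ t : ℝ, -1 < z t)
    (hz' : ∀ t : ℝ, HasDerivAt z (-(1 + z t) * H (z t)) t) :
    ∀ t : ℝ, HasDerivAt (fun t => Hp (z t)) (Hp (z t) * H (z t) + 1) t := by
  intro t
  set a := z t with ha
  have haI : a ∈ Set.Ioi (-1 : ℝ) := hz t
  have ha1 : (0:ℝ) < 1 + a := by have := hz t; simp only [ha] at *; linarith [haI]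
  have hHa : 0 < H a := hHpos a haI
  set f : ℝ → ℝ := fun x => 1 / H x with hf
  set I : ℝ → ℝ := fun u => ∫ x in Set.Ioi u, f x with hI
  -- continuity of f at a
  have hfc : ContinuousAt f a := by
    have hHca : ContinuousAt H a :=
      (hHcont a haI).continuousAt (Ioi_mem_nhds haI)
    exact (continuousAt_const.div hHca hHa.ne')
  -- derivative of u ↦ ∫ a..u f at a
  have hfcOn : ContinuousOn f (Set.Ioi (-1)) := fun x hx =>
    ((continuousOn_const.div hHcont (fun y hy => (hHpos y hy).ne')) x hx)
  have hFTC : HasDerivAt (fun u => ∫ x in a..u, f x) (f a) a := by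
    apply intervalIntegral.integral_hasDerivAt_right
    · constructor <;> simp [MeasureTheory.IntegrableOn]
    · exact hfcOn.stronglyMeasurableAtFilter isOpen_Ioi a haI
    · exact hfc
  have hIa : HasDerivAt I (-(f a)) a := by
    have heq : I =ᶠ[nhds a] fun u => I a - ∫ x in a..u, f x := by
      filter_upwards [Ioi_mem_nhds haI] with u hu
      exact Ioi_split f (hint a haI) (hint u hu)
    have : HasDerivAt (fun u => I a - ∫ x in a..u, f x) (-(f a)) a := by
      have h := (hasDerivAt_const a (I a)).sub hFTC
      rw [zero_sub] at h
      exact h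
    exact this.congr_of_eventuallyEq heq
  -- derivative of Hp at a
  have hinv : HasDerivAt (fun u : ℝ => (1 + u)⁻¹) (-1 / (1 + a)^2) a := by
    have h1 : HasDerivAt (fun u : ℝ => 1 + u) 1 a := by
      have h := (hasDerivAt_const a (1:ℝ)).add (hasDerivAt_id a)
      rw [zero_add] at h
      exact h
    exact h1.inv ha1.ne'
  have hHpa : HasDerivAt Hp (-1 / (1 + a)^2 * I a + (1 + a)⁻¹ * (-(f a))) a := by
    have := hinv.mul hIa
    have heq : Hp = fun u => (1 + u)⁻¹ * I u := by funext u; exact hHp u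
    rw [heq]; exact this
  have hcomp := hHpa.comp t (hz' t)
  refine hcomp.congr_deriv ?_
  symm
  rw [hHp a]
  have hHa' : H a ≠ 0 := hHa.ne'
  have ha1' : (1 + a) ≠ 0 := ha1.ne'
  show (1 + a)⁻¹ * I a * H a + 1 = _
  rw [← ha]
  simp only [hf]
  field_simp [hf]
  ring
end

section
/- Let N > 2 and let H : ℝ → ℝ be differentiable and strictly positive on (-1, ∞) with H(z) → ∞ as z → ∞, suppose x ↦ 1/H(x) is integrable on (z, ∞) for every z > -1, and suppose that (1+z)·H'(z)/H(z) tends to N/2 as z → ∞. Define H_p(z) = (1+z)⁻¹ ∫_z^∞ dx/H(x). Then the recession velocity of the particle horizon H_p(z)·H(z) tends to 2/(N-2) as z → ∞; equivalently, the particle horizon velocity dH_p/dt = H_p(z)H(z) + 1 tends to N/(N-2) at the origin of the universe. -/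
open MeasureTheory Filter Set

/-- Recession velocity of the particle horizon at the origin of the universe:
if `N > 2` and `(1+z)H'(z)/H(z) → N/2` as `z → ∞`, then
`H_p(z)·H(z) → 2/(N-2)` as `z → ∞`; equivalently, the particle horizon velocity
`dH_p/dt = H_p·H + 1 → N/(N-2)`. -/
theorem particleHorizon_velocity_at_origin
    (N : ℝ) (hN : 2 < N)
    (H H' : ℝ → ℝ)
    (hHderiv : ∀ z ∈ Set.Ioi (-1 : ℝ), HasDerivAt H (H' z) z)
    (hHpos : ∀ x ∈ Set.Ioi (-1 : ℝ), 0 < H x)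
    (hHtop : Tendsto H atTop atTop)
    (hint : ∀ z : ℝ, -1 < z → IntegrableOn (fun x => 1 / H x) (Set.Ioi z))
    (hlog : Tendsto (fun z => (1 + z) * H' z / H z) atTop (nhds (N / 2)))
    (Hp : ℝ → ℝ)
    (hHp : ∀ z : ℝ, Hp z = (1 + z)⁻¹ * ∫ x in Set.Ioi z, 1 / H x) :
    Tendsto (fun z => Hp z * H z) atTop (nhds (2 / (N - 2))) ∧
    Tendsto (fun z => Hp z * H z + 1) atTop (nhds (N / (N - 2))) := by
  have hHcont : ContinuousOn H (Ioi (-1:ℝ)) :=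
    fun x hx => (hHderiv x hx).continuousAt.continuousWithinAt
  have hinv_cont : ContinuousOn (fun x => 1 / H x) (Ioi (-1:ℝ)) :=
    fun x hx => (continuousWithinAt_const.div (hHcont x hx) (hHpos x hx).ne')
  set F : ℝ → ℝ := fun z => ∫ t in (0:ℝ)..z, 1 / H t with hFdef
  set f : ℝ → ℝ := fun z => (∫ x in Ioi (0:ℝ), 1 / H x) - F z with hfdef
  set g : ℝ → ℝ := fun z => (1 + z) / H z with hgdef
  have hint0 : IntegrableOn (fun x => 1 / H x) (Ioi (0:ℝ)) := hint 0 (by norm_num)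
  -- derivative of F
  have hFderiv : ∀ z ∈ Ioi (-1:ℝ), HasDerivAt F (1 / H z) z := by
    intro z hz
    apply intervalIntegral.integral_hasDerivAt_right
    · rw [intervalIntegrable_iff]
      refine ((hint ((min 0 z - 1)/2) ?_).mono_set ?_)
      · simp only [Ioi, mem_setOf_eq] at hz
        have : -1 < min 0 z := lt_min (by norm_num) hz
        linarith
      · intro x hx
        simp only [mem_Ioi]
        have hmin : -1 < min 0 z := lt_min (by norm_num) hz
        have h1 : min 0 z < x := hx.1
        linarith
    · exact ContinuousOn.stronglyMeasurableAtFilter isOpen_Ioi hinv_cont z hz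
    · exact (hinv_cont z hz).continuousAt (isOpen_Ioi.mem_nhds hz)
  -- f equals the tail integral for z ≥ 0
  have hfeq : ∀ z : ℝ, 0 ≤ z → (∫ x in Ioi z, 1 / H x) = f z := by
    intro z hz
    have hzm : (-1:ℝ) < z := by linarith
    have hsplit : (∫ x in Ioi (0:ℝ), 1 / H x)
        = (∫ x in Ioc (0:ℝ) z, 1 / H x) + ∫ x in Ioi z, 1 / H x := by
      rw [← setIntegral_union Ioc_disjoint_Ioi_same measurableSet_Ioi
        (hint0.mono_set Ioc_subset_Ioi_self) (hint z hzm)]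
      rw [Ioc_union_Ioi' le_rfl, min_eq_left hz]
    have hFz : F z = ∫ x in Ioc (0:ℝ) z, 1 / H x := intervalIntegral.integral_of_le hz
    simp only [hfdef, hFz]
    linarith [hsplit]
  -- f → 0
  have hf0 : Tendsto f atTop (nhds 0) := by
    have hFt : Tendsto F atTop (nhds (∫ x in Ioi (0:ℝ), 1 / H x)) :=
      intervalIntegral_tendsto_integral_Ioi 0 hint0 tendsto_id
    have h := hFt.const_sub (∫ x in Ioi (0:ℝ), 1 / H x)
    rw [sub_self] at h
    exact h
  -- derivative of g
  have hgderiv : ∀ z ∈ Ioi (-1:ℝ),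
      HasDerivAt g ((H z - (1 + z) * H' z) / (H z)^2) z := by
    intro z hz
    have h1 : HasDerivAt (fun z : ℝ => 1 + z) 1 z := (hasDerivAt_id z).const_add 1
    have := h1.div (hHderiv z hz) (hHpos z hz).ne'
    rw [show ((H z - (1 + z) * H' z) / (H z)^2) = ((1 * H z - (1 + z) * H' z) / (H z)^2) by ring]
    exact this
  -- pick c strictly between 1 and N/2
  set c : ℝ := (N + 2) / 4 with hcdef
  have hc1 : 1 < c := by rw [hcdef]; linarith
  have hc2 : c < N / 2 := by rw [hcdef]; linarith
  obtain ⟨z0, hz0⟩ : ∃ z0 : ℝ, ∀ z ≥ z0, c < (1 + z) * H' z / H z ∧ 0 < z := by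
    have h1 : ∀ᶠ z in atTop, c < (1 + z) * H' z / H z :=
      hlog.eventually (eventually_gt_nhds hc2)
    have h2 : ∀ᶠ z : ℝ in atTop, 0 < z := eventually_gt_atTop 0
    exact eventually_atTop.mp (h1.and h2)
  have hmem : ∀ z : ℝ, z ≥ z0 → z ∈ Ioi (-1:ℝ) := by
    intro z hz; have := (hz0 z hz).2; simp only [mem_Ioi]; linarith
  have hkey : ∀ z : ℝ, z ≥ z0 → c * H z < (1 + z) * H' z := by
    intro z hz
    have hH := hHpos z (hmem z hz)
    have := (hz0 z hz).1
    rw [lt_div_iff₀ hH] at this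
    linarith
  -- w(z) = (1+z)^c / H z, antitone on [z0, ∞)
  set w : ℝ → ℝ := fun z => (1 + z) ^ c / H z with hwdef
  have hwderiv : ∀ z ∈ Ioi (-1:ℝ), HasDerivAt w
      ((c * (1 + z) ^ (c - 1) * 1 * H z - (1 + z) ^ c * H' z) / (H z)^2) z := by
    intro z hz
    have h1z : (0:ℝ) < 1 + z := by simp only [mem_Ioi] at hz; linarith
    have h0 := ((hasDerivAt_id z).const_add 1).rpow_const (p := c) (Or.inl h1z.ne')
    have hnum : HasDerivAt (fun z : ℝ => (1 + z) ^ c) (c * (1 + z) ^ (c - 1) * 1) z := by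
      simpa [mul_comm] using h0
    exact hnum.div (hHderiv z hz) (hHpos z (hz)).ne'
  have hw_anti : AntitoneOn w (Ici z0) := by
    apply antitoneOn_of_deriv_nonpos (convex_Ici z0)
    · intro z hz
      have hz' : z ∈ Ioi (-1:ℝ) := hmem z hz
      exact (hwderiv z hz').continuousAt.continuousWithinAt
    · intro z hz
      rw [interior_Ici] at hz
      exact (hwderiv z (hmem z (le_of_lt hz))).differentiableAt.differentiableWithinAt
    · intro z hz
      rw [interior_Ici] at hz
      have hzge : z ≥ z0 := le_of_lt hz
      have hz' : z ∈ Ioi (-1:ℝ) := hmem z hzge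
      have h1z : (0:ℝ) < 1 + z := by simp only [mem_Ioi] at hz'; linarith
      rw [(hwderiv z hz').deriv]
      have hpow : (1 + z) ^ c = (1 + z) ^ (c - 1) * (1 + z) := by
        rw [← Real.rpow_add_one h1z.ne' (c - 1)]
        norm_num
      have hnum : c * (1 + z) ^ (c - 1) * 1 * H z - (1 + z) ^ c * H' z
          = (1 + z) ^ (c - 1) * (c * H z - (1 + z) * H' z) := by
        rw [hpow]; ring
      apply div_nonpos_of_nonpos_of_nonneg
      · rw [hnum]
        apply mul_nonpos_of_nonneg_of_nonpos
        · positivity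
        · linarith [hkey z hzge]
      · positivity
  -- g → 0 by squeezing with w z0 * (1+z)^(1-c)
  have hgw : ∀ z : ℝ, z ≥ z0 → g z = w z * (1 + z) ^ (1 - c) := by
    intro z hz
    have h1z : (0:ℝ) < 1 + z := by have := (hz0 z hz).2; linarith
    simp only [hgdef, hwdef]
    rw [div_mul_eq_mul_div, ← Real.rpow_add h1z]
    norm_num
  have hupper : Tendsto (fun z : ℝ => w z0 * (1 + z) ^ (1 - c)) atTop (nhds 0) := by
    have hy : (0:ℝ) < c - 1 := by linarith
    have h1 : Tendsto (fun x : ℝ => x ^ (-(c - 1))) atTop (nhds 0) :=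
      tendsto_rpow_neg_atTop hy
    have h2 : Tendsto (fun z : ℝ => 1 + z) atTop atTop :=
      tendsto_atTop_add_const_left _ 1 tendsto_id
    have h3 := h1.comp h2
    have h4 : (fun z : ℝ => (1 + z) ^ (1 - c)) = (fun x : ℝ => x ^ (-(c - 1))) ∘ (fun z => 1 + z) := by
      funext z; simp [neg_sub]
    rw [h4] at *
    simpa using (h3.const_mul (w z0))
  have hg0 : Tendsto g atTop (nhds 0) := by
    apply tendsto_of_tendsto_of_tendsto_of_le_of_le' tendsto_const_nhds hupper
    · filter_upwards [eventually_ge_atTop z0] with z hz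
      have h1z : (0:ℝ) < 1 + z := by have := (hz0 z hz).2; linarith
      have hH := hHpos z (hmem z hz)
      positivity
    · filter_upwards [eventually_ge_atTop z0] with z hz
      rw [hgw z hz]
      have hw : w z ≤ w z0 := hw_anti (show z0 ∈ Ici z0 from le_refl z0) hz hz
      have : (0:ℝ) ≤ (1 + z) ^ (1 - c) := by
        have h1z : (0:ℝ) < 1 + z := by have := (hz0 z hz).2; linarith
        positivity
      exact mul_le_mul_of_nonneg_right hw this
  -- g' ≠ 0 eventually
  have hg'ne : ∀ᶠ z in atTop, (H z - (1 + z) * H' z) / (H z)^2 ≠ 0 := by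
    filter_upwards [eventually_ge_atTop z0] with z hz
    have hH := hHpos z (hmem z hz)
    have hk := hkey z hz
    have hnum : H z - (1 + z) * H' z < 0 := by nlinarith
    exact ne_of_lt (div_neg_of_neg_of_pos hnum (by positivity))
  -- limit of f'/g'
  have hdiv : Tendsto (fun z => (-(1 / H z)) / ((H z - (1 + z) * H' z) / (H z)^2))
      atTop (nhds (2 / (N - 2))) := by
    have hden : Tendsto (fun z => (1 + z) * H' z / H z - 1) atTop (nhds (N / 2 - 1)) :=
      hlog.sub_const 1
    have hne : N / 2 - 1 ≠ 0 := by intro h; nlinarith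
    have hlim : Tendsto (fun z => 1 / ((1 + z) * H' z / H z - 1)) atTop
        (nhds (1 / (N / 2 - 1))) := tendsto_const_nhds.div hden hne
    have hval : 1 / (N / 2 - 1) = 2 / (N - 2) := by
      rw [div_eq_div_iff (by linarith) (by linarith)]; ring
    rw [hval] at hlim
    refine hlim.congr' ?_
    filter_upwards [eventually_ge_atTop z0] with z hz
    have hH := hHpos z (hmem z hz)
    have hk := hkey z hz
    rw [div_sub_one hH.ne', one_div_div, div_div_eq_mul_div]
    have hm : -(1 / H z) * H z ^ 2 = -H z := by
      field_simp
    rw [hm, neg_div, ← div_neg, neg_sub]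
  -- L'Hôpital
  have hff' : ∀ᶠ z in atTop, HasDerivAt f (-(1 / H z)) z := by
    filter_upwards [eventually_gt_atTop (-1:ℝ)] with z hz
    exact (hFderiv z hz).const_sub _
  have hgg' : ∀ᶠ z in atTop, HasDerivAt g ((H z - (1 + z) * H' z) / (H z)^2) z := by
    filter_upwards [eventually_gt_atTop (-1:ℝ)] with z hz
    exact hgderiv z hz
  have hmain : Tendsto (fun z => f z / g z) atTop (nhds (2 / (N - 2))) :=
    HasDerivAt.lhopital_zero_atTop hff' hgg' hg'ne hf0 hg0 hdiv
  have hfirst : Tendsto (fun z => Hp z * H z) atTop (nhds (2 / (N - 2))) := by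
    refine hmain.congr' ?_
    filter_upwards [eventually_ge_atTop z0] with z hz
    have h1z : (0:ℝ) < 1 + z := by have := (hz0 z hz).2; linarith
    have hH := hHpos z (hmem z hz)
    rw [hHp z, ← hfeq z (le_of_lt (hz0 z hz).2)]
    simp only [hgdef]
    field_simp
  refine ⟨hfirst, ?_⟩
  have hval2 : N / (N - 2) = 2 / (N - 2) + 1 := by
    have h2 : N - 2 ≠ 0 := by intro h; nlinarith
    field_simp
    ring
  rw [hval2]
  simpa using hfirst.add (tendsto_const_nhds (x := (1:ℝ)) (f := atTop))
end

section
/- Let N < 2 and let H : ℝ → ℝ be differentiable and strictly positive on (-1, ∞), suppose x ↦ 1/H(x) is integrable on (-1, b] for every b > -1 but not integrable on (-1, ∞), suppose H(z)/(1+z) tends to 0 as z → ∞, and suppose that (1+z)·H'(z)/H(z) tends to N/2 as z → ∞. Define H_e(z) = (1+z)⁻¹ ∫_{-1}^z dx/H(x). Then the recession velocity of the event horizon H_e(z)·H(z) tends to 2/(2-N) as z → ∞; equivalently, the event horizon velocity dH_e/dt = H_e(z)H(z) - 1 tends to N/(2-N) at the origin of the universe. -/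
open MeasureTheory Filter Set

/-- L'Hôpital-type rule at `atTop` for the `·/∞` case. -/
theorem lhopital_atTop_div_tendsto
    {f f' g g' : ℝ → ℝ} {a L : ℝ}
    (hf : ∀ x, a ≤ x → HasDerivAt f (f' x) x)
    (hg : ∀ x, a ≤ x → HasDerivAt g (g' x) x)
    (hg'pos : ∀ x, a ≤ x → 0 < g' x)
    (hgtop : Tendsto g atTop atTop)
    (hratio : Tendsto (fun x => f' x / g' x) atTop (nhds L)) :
    Tendsto (fun x => f x / g x) atTop (nhds L) := by
  rw [Metric.tendsto_nhds]
  intro ε hε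
  have hε2 : 0 < ε / 2 := by linarith
  -- choose b ≥ a with the derivative ratio within ε/2 beyond b
  obtain ⟨b₀, hb₀⟩ := (Metric.tendsto_nhds.1 hratio (ε / 2) hε2).exists_forall_of_atTop
  set b := max a b₀ with hbdef
  have hab : a ≤ b := le_max_left _ _
  have hratb : ∀ x, b ≤ x → |f' x / g' x - L| < ε / 2 := by
    intro x hx
    have := hb₀ x (le_trans (le_max_right _ _) hx)
    rwa [Real.dist_eq] at this
  set C : ℝ := |f b| + (|L| + ε / 2) * |g b| with hC
  have hC0 : 0 ≤ C := by positivity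
  -- eventually z > b and g z large and positive
  have hev : ∀ᶠ z in atTop, b < z ∧ (2 * (C + 1) / ε < g z ∧ 0 < g z) := by
    filter_upwards [eventually_gt_atTop b,
      hgtop.eventually_gt_atTop (2 * (C + 1) / ε), hgtop.eventually_gt_atTop 0] with z h1 h2 h3
    exact ⟨h1, h2, h3⟩
  filter_upwards [hev] with z ⟨hz, hgz, hgz0⟩
  have haz : a ≤ z := le_trans hab hz.le
  -- Cauchy MVT on [b, z]
  have hcf : ContinuousOn f (Icc b z) := fun x hx =>
    ((hf x (le_trans hab hx.1)).continuousAt).continuousWithinAt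
  have hcg : ContinuousOn g (Icc b z) := fun x hx =>
    ((hg x (le_trans hab hx.1)).continuousAt).continuousWithinAt
  have hdf : ∀ x ∈ Ioo b z, HasDerivAt f (f' x) x := fun x hx => hf x (le_trans hab hx.1.le)
  have hdg : ∀ x ∈ Ioo b z, HasDerivAt g (g' x) x := fun x hx => hg x (le_trans hab hx.1.le)
  obtain ⟨c, hc, hceq⟩ :=
    exists_ratio_hasDerivAt_eq_ratio_slope f f' hz hcf hdf g g' hcg hdg
  have hac : a ≤ c := le_trans hab hc.1.le
  have hg'c : 0 < g' c := hg'pos c hac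
  -- g z - g b > 0 via MVT
  have hgbz : g b < g z := by
    obtain ⟨d, hd, hdeq⟩ := exists_hasDerivAt_eq_slope g g' hz hcg hdg
    have hd' : 0 < g' d := hg'pos d (le_trans hab hd.1.le)
    rw [hdeq] at hd'
    have := mul_pos hd' (sub_pos.2 hz)
    rw [div_mul_cancel₀ _ (sub_ne_zero.2 (ne_of_gt hz))] at this
    linarith
  set r := f' c / g' c with hr
  have hrL : |r - L| < ε / 2 := hratb c hc.1.le
  have hfz : f z = f b + (g z - g b) * r := by
    have h1 : f z - f b = (g z - g b) * r := by
      rw [hr, mul_div_assoc']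
      rw [eq_div_iff (ne_of_gt hg'c)]
      linarith [hceq]
    linarith
  -- main estimate
  have key : f z / g z - L = (f b - r * g b) / g z + (r - L) := by
    field_simp [ne_of_gt hgz0, hfz]
    rw [hfz]; ring
  rw [Real.dist_eq, key]
  have hCb : |f b - r * g b| ≤ C := by
    have hrabs : |r| ≤ |L| + ε / 2 := by
      have := abs_sub_abs_le_abs_sub r L
      linarith [hrL.le]
    calc |f b - r * g b| ≤ |f b| + |r * g b| := abs_sub _ _
      _ ≤ |f b| + (|L| + ε / 2) * |g b| := by
          rw [abs_mul]
          have := mul_le_mul_of_nonneg_right hrabs (abs_nonneg (g b))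
          linarith
  have h1 : |(f b - r * g b) / g z| < ε / 2 := by
    rw [abs_div, abs_of_pos hgz0]
    have hgz' : 2 * (C + 1) / ε < g z := hgz
    have hbig : 2 * (C + 1) / ε > 0 := by positivity
    rw [div_lt_iff₀ hgz0]
    have : ε / 2 * (2 * (C + 1) / ε) = C + 1 := by field_simp
    calc |f b - r * g b| ≤ C := hCb
      _ < C + 1 := by linarith
      _ = ε / 2 * (2 * (C + 1) / ε) := this.symm
      _ < ε / 2 * g z := by
          exact mul_lt_mul_of_pos_left hgz' hε2
  calc |(f b - r * g b) / g z + (r - L)| ≤ |(f b - r * g b) / g z| + |r - L| := abs_add_le _ _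
    _ < ε / 2 + ε / 2 := add_lt_add h1 hrL
    _ = ε := by ring

/-- Recession velocity of the event horizon at the origin of the universe, case `N < 2`:
if `∫_{-1}^∞ dx/H(x)` diverges, `H(z)/(1+z) → 0` and `(1+z)H'(z)/H(z) → N/2` as `z → ∞`,
then `H_e(z)·H(z) → 2/(2-N)` as `z → ∞`; equivalently, the event horizon velocity
`dH_e/dt = H_e·H - 1 → N/(2-N)`. -/
theorem eventHorizon_velocity_at_origin
    (N : ℝ) (hN : N < 2)
    (H H' : ℝ → ℝ)
    (hHderiv : ∀ z ∈ Set.Ioi (-1 : ℝ), HasDerivAt H (H' z) z)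
    (hHpos : ∀ x ∈ Set.Ioi (-1 : ℝ), 0 < H x)
    (hint : ∀ b : ℝ, -1 < b → IntegrableOn (fun x => 1 / H x) (Set.Ioc (-1) b))
    (hdiv : ¬ IntegrableOn (fun x => 1 / H x) (Set.Ioi (-1)))
    (hHratio : Tendsto (fun z => H z / (1 + z)) atTop (nhds 0))
    (hlog : Tendsto (fun z => (1 + z) * H' z / H z) atTop (nhds (N / 2)))
    (He : ℝ → ℝ)
    (hHe : ∀ z : ℝ, He z = (1 + z)⁻¹ * ∫ x in Set.Ioc (-1) z, 1 / H x) :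
    Tendsto (fun z => He z * H z) atTop (nhds (2 / (2 - N))) ∧
    Tendsto (fun z => He z * H z - 1) atTop (nhds (N / (2 - N))) := by
  have h2N : (0:ℝ) < 2 - N := by linarith
  -- pick a > -1 such that the log-derivative ratio is < 1 from a on
  have hev1 : ∀ᶠ z in atTop, (1 + z) * H' z / H z < 1 := by
    have : (N / 2 : ℝ) < 1 := by linarith
    exact hlog.eventually_lt_const this
  obtain ⟨a₀, ha₀⟩ := hev1.exists_forall_of_atTop
  set a : ℝ := max a₀ 0 with hadef
  have ha1 : (-1:ℝ) < a := lt_of_lt_of_le (by norm_num) (le_max_right _ _)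
  have haS : ∀ x : ℝ, a ≤ x → x ∈ Set.Ioi (-1:ℝ) := fun x hx => lt_of_lt_of_le ha1 hx
  have hratlt : ∀ x : ℝ, a ≤ x → (1 + x) * H' x / H x < 1 :=
    fun x hx => ha₀ x (le_trans (le_max_left _ _) hx)
  -- the functions
  set f : ℝ → ℝ := fun z => ∫ x in (-1:ℝ)..z, 1 / H x with hfdef
  set g : ℝ → ℝ := fun z => (1 + z) / H z with hgdef
  set f' : ℝ → ℝ := fun z => 1 / H z with hf'def
  set g' : ℝ → ℝ := fun z => (H z - (1 + z) * H' z) / (H z) ^ 2 with hg'def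
  -- continuity of 1/H on Ioi (-1)
  have hcont : ∀ x ∈ Set.Ioi (-1:ℝ), ContinuousAt (fun y => 1 / H y) x := by
    intro x hx
    exact continuousAt_const.div (hHderiv x hx).continuousAt (ne_of_gt (hHpos x hx))
  -- derivative of f
  have hfderiv : ∀ x : ℝ, a ≤ x → HasDerivAt f (f' x) x := by
    intro x hx
    have hx1 : (-1:ℝ) < x := haS x hx
    have hii : IntervalIntegrable (fun y => 1 / H y) volume (-1) x := by
      rw [intervalIntegrable_iff_integrableOn_Ioc_of_le hx1.le]
      exact hint x hx1
    have hmeas : StronglyMeasurableAtFilter (fun y => 1 / H y) (nhds x) volume := by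
      refine ContinuousOn.stronglyMeasurableAtFilter isOpen_Ioi ?_ x hx1
      exact fun y hy => (hcont y hy).continuousWithinAt
    exact intervalIntegral.integral_hasDerivAt_right hii hmeas (hcont x hx1)
  -- derivative of g
  have hgderiv : ∀ x : ℝ, a ≤ x → HasDerivAt g (g' x) x := by
    intro x hx
    have hx1 : (-1:ℝ) < x := haS x hx
    have hd1 : HasDerivAt (fun z : ℝ => 1 + z) 1 x := by
      simpa using (hasDerivAt_id x).const_add 1
    have := hd1.div (hHderiv x hx1) (ne_of_gt (hHpos x hx1))
    have h2 : HasDerivAt g ((1 * H x - (1 + x) * H' x) / H x ^ 2) x := this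
    simpa [hg'def, one_mul] using h2
  -- positivity of g'
  have hg'pos : ∀ x : ℝ, a ≤ x → 0 < g' x := by
    intro x hx
    have hx1 : (-1:ℝ) < x := haS x hx
    have hH : 0 < H x := hHpos x hx1
    have hlt : (1 + x) * H' x < H x := by
      have := hratlt x hx
      calc (1 + x) * H' x = (1 + x) * H' x / H x * H x := by field_simp
        _ < 1 * H x := by exact mul_lt_mul_of_pos_right this hH
        _ = H x := one_mul _
    apply div_pos (by linarith) (by positivity)
  -- g → atTop
  have hgtop : Tendsto g atTop atTop := by
    have hpos : ∀ᶠ z in atTop, H z / (1 + z) ∈ Set.Ioi (0:ℝ) := by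
      filter_upwards [eventually_gt_atTop (-1:ℝ)] with z hz
      exact div_pos (hHpos z hz) (by linarith)
    have h1 : Tendsto (fun z => H z / (1 + z)) atTop (nhdsWithin 0 (Set.Ioi 0)) :=
      tendsto_nhdsWithin_of_tendsto_nhds_of_eventually_within _ hHratio hpos
    have := h1.inv_tendsto_nhdsGT_zero
    refine this.congr fun z => ?_
    simp [hgdef, Pi.inv_apply, one_div]
  -- ratio of derivatives
  have hratio : Tendsto (fun x => f' x / g' x) atTop (nhds (2 / (2 - N))) := by
    have hlim : Tendsto (fun z => (1 - (1 + z) * H' z / H z)⁻¹) atTop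
        (nhds ((1 - N / 2)⁻¹)) := by
      refine Tendsto.inv₀ ?_ (by intro h; rw [sub_eq_zero] at h; linarith)
      exact (tendsto_const_nhds.sub hlog)
    have hne1 : (1 - N / 2 : ℝ) ≠ 0 := by intro h; apply absurd hN; push_neg; linarith
    have heq : (1 - N / 2 : ℝ)⁻¹ = 2 / (2 - N) := by
      field_simp
    rw [← heq]
    refine hlim.congr' ?_
    filter_upwards [eventually_ge_atTop a] with x hx
    have hx1 : (-1:ℝ) < x := haS x hx
    have hH : (0:ℝ) < H x := hHpos x hx1
    have hne : H x ≠ 0 := ne_of_gt hH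
    have hlt : (1 + x) * H' x < H x := by
      have := hratlt x hx
      calc (1 + x) * H' x = (1 + x) * H' x / H x * H x := by field_simp
        _ < 1 * H x := mul_lt_mul_of_pos_right this hH
        _ = H x := one_mul _
    have hne2 : H x - (1 + x) * H' x ≠ 0 := by intro h; linarith [sub_eq_zero.mp h]
    simp only [hf'def, hg'def]
    field_simp
  -- L'Hôpital
  have hmain : Tendsto (fun z => f z / g z) atTop (nhds (2 / (2 - N))) :=
    lhopital_atTop_div_tendsto hfderiv hgderiv hg'pos hgtop hratio
  -- He z * H z = f z / g z eventually
  have hcongr : (fun z => He z * H z) =ᶠ[atTop] fun z => f z / g z := by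
    filter_upwards [eventually_gt_atTop (-1:ℝ)] with z hz
    have hH : 0 < H z := hHpos z hz
    have h1z : (0:ℝ) < 1 + z := by linarith
    rw [hHe z]
    have : f z = ∫ x in Set.Ioc (-1:ℝ) z, 1 / H x := by
      simp only [hfdef]
      exact intervalIntegral.integral_of_le hz.le
    rw [← this]
    simp only [hgdef]
    field_simp
  have hfirst : Tendsto (fun z => He z * H z) atTop (nhds (2 / (2 - N))) :=
    hmain.congr' hcongr.symm
  refine ⟨hfirst, ?_⟩
  have : (2 / (2 - N) - 1 : ℝ) = N / (2 - N) := by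
    field_simp [ne_of_gt h2N]
    ring
  rw [← this]
  exact hfirst.sub_const 1
end

section
/- Let H : ℝ → ℝ be continuous and strictly positive on (-1, ∞), suppose x ↦ 1/H(x) is integrable on (-1, b] for every b > -1, and suppose H(z) → ∞ as z → -1⁺. Define H_e(z) = (1+z)⁻¹ ∫_{-1}^z dx/H(x). Then H_e(z) tends to 0 as z → -1⁺. (This is the case m < 0 of the value of the event horizon at the far future.) -/
open MeasureTheory Filter Set

/-- Event horizon at the far future, case `m < 0` (`H(z) → ∞` as `z → -1⁺`):
`H_e(z) = (1+z)⁻¹ ∫_{-1}^z dx/H(x) → 0` as `z → -1⁺`. -/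
theorem eventHorizon_tendsto_zero_far_future
    (H : ℝ → ℝ)
    (hHcont : ContinuousOn H (Set.Ioi (-1)))
    (hHpos : ∀ x ∈ Set.Ioi (-1 : ℝ), 0 < H x)
    (hint : ∀ b : ℝ, -1 < b → IntegrableOn (fun x => 1 / H x) (Set.Ioc (-1) b))
    (hHtop : Tendsto H (nhdsWithin (-1) (Set.Ioi (-1))) atTop) :
    Tendsto (fun z => (1 + z)⁻¹ * ∫ x in Set.Ioc (-1) z, 1 / H x)
      (nhdsWithin (-1) (Set.Ioi (-1))) (nhds 0) := by
  rw [Metric.tendsto_nhdsWithin_nhds]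
  intro ε hε
  have hev : ∀ᶠ x in nhdsWithin (-1:ℝ) (Set.Ioi (-1)), 2/ε ≤ H x :=
    hHtop.eventually (eventually_ge_atTop (2/ε))
  rw [Filter.eventually_iff, Metric.mem_nhdsWithin_iff] at hev
  obtain ⟨δ, hδ, hδH⟩ := hev
  refine ⟨δ, hδ, ?_⟩
  intro z hz hdist
  have hz1 : (-1:ℝ) < z := hz
  have hz1' : 0 < 1 + z := by linarith
  have hzd : z + 1 < δ := by
    rw [Real.dist_eq] at hdist
    have := abs_lt.mp hdist
    linarith [this.1, this.2]
  have hbound : ∀ x ∈ Set.Ioc (-1:ℝ) z, ‖1 / H x‖ ≤ ε/2 := by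
    intro x hx
    have hx1 : (-1:ℝ) < x := hx.1
    have hdx : dist x (-1) < δ := by
      rw [Real.dist_eq, abs_lt]
      constructor <;> [linarith; linarith [hx.2]]
    have hge : 2/ε ≤ H x := hδH ⟨Metric.mem_ball.mpr hdx, hx1⟩
    have hxpos : 0 < H x := hHpos x hx1
    have h2e : (0:ℝ) < 2/ε := by positivity
    have : 1 / H x ≤ 1 / (2/ε) := one_div_le_one_div_of_le h2e hge
    rw [one_div_div] at this
    rw [Real.norm_eq_abs, abs_of_pos (by positivity)]
    linarith
  have hmeas : volume (Set.Ioc (-1:ℝ) z) < ⊤ := by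
    rw [Real.volume_Ioc]; exact ENNReal.ofReal_lt_top
  have hI := norm_setIntegral_le_of_norm_le_const hmeas hbound
  rw [Measure.real, Real.volume_Ioc, ENNReal.toReal_ofReal (by linarith)] at hI
  rw [dist_zero_right, norm_mul, Real.norm_eq_abs, abs_of_pos (inv_pos.mpr hz1')]
  calc (1 + z)⁻¹ * ‖∫ x in Set.Ioc (-1:ℝ) z, 1 / H x‖
      ≤ (1 + z)⁻¹ * (ε/2 * (z - (-1))) := by
        apply mul_le_mul_of_nonneg_left hI (le_of_lt (inv_pos.mpr hz1'))
    _ = ε/2 * ((1 + z)⁻¹ * (1 + z)) := by ring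
    _ = ε/2 := by rw [inv_mul_cancel₀ (ne_of_gt hz1'), mul_one]
    _ < ε := by linarith
end

section
/- Let m < 2 and let H : ℝ → ℝ be differentiable and strictly positive on (-1, ∞), suppose x ↦ 1/H(x) is integrable on (-1, b] for every b > -1, suppose H(z)/(1+z) tends to +∞ as z → -1⁺, and suppose that (1+z)·H'(z)/H(z) tends to m/2 as z → -1⁺. Define H_e(z) = (1+z)⁻¹ ∫_{-1}^z dx/H(x). Then the recession velocity of the event horizon H_e(z)·H(z) tends to 2/(2-m) as z → -1⁺; equivalently, the event horizon velocity dH_e/dt = H_e(z)H(z) - 1 tends to m/(2-m) at the far future. -/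
open MeasureTheory Filter Set

/-- Recession velocity of the event horizon at the far future:
if `m < 2`, `H(z)/(1+z) → ∞` and `(1+z)H'(z)/H(z) → m/2` as `z → -1⁺`, then
`H_e(z)·H(z) → 2/(2-m)` as `z → -1⁺`; equivalently, the event horizon velocity
`dH_e/dt = H_e·H - 1 → m/(2-m)` at the far future. -/
theorem eventHorizon_velocity_far_future
    (m : ℝ) (hm : m < 2)
    (H H' : ℝ → ℝ)
    (hHderiv : ∀ z ∈ Set.Ioi (-1 : ℝ), HasDerivAt H (H' z) z)
    (hHpos : ∀ x ∈ Set.Ioi (-1 : ℝ), 0 < H x)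
    (hint : ∀ b : ℝ, -1 < b → IntegrableOn (fun x => 1 / H x) (Set.Ioc (-1) b))
    (hHratio : Tendsto (fun z => H z / (1 + z)) (nhdsWithin (-1) (Set.Ioi (-1))) atTop)
    (hlog : Tendsto (fun z => (1 + z) * H' z / H z)
      (nhdsWithin (-1) (Set.Ioi (-1))) (nhds (m / 2)))
    (He : ℝ → ℝ)
    (hHe : ∀ z : ℝ, He z = (1 + z)⁻¹ * ∫ x in Set.Ioc (-1) z, 1 / H x) :
    Tendsto (fun z => He z * H z) (nhdsWithin (-1) (Set.Ioi (-1))) (nhds (2 / (2 - m))) ∧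
    Tendsto (fun z => He z * H z - 1) (nhdsWithin (-1) (Set.Ioi (-1))) (nhds (m / (2 - m))) := by
  have hOneDivCont : ContinuousOn (fun x => 1 / H x) (Set.Ioi (-1 : ℝ)) := by
    apply ContinuousOn.div continuousOn_const
    · exact fun x hx => (hHderiv x hx).continuousAt.continuousWithinAt
    · exact fun x hx => ne_of_gt (hHpos x hx)
  -- obtain an interval where (1+z)H'/H < 1
  have hm2 : m / 2 < 1 := by linarith
  have hev : ∀ᶠ z in nhdsWithin (-1) (Set.Ioi (-1 : ℝ)), (1 + z) * H' z / H z < 1 :=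
    hlog.eventually (eventually_lt_nhds hm2)
  obtain ⟨b, hb, hsub⟩ := mem_nhdsGT_iff_exists_Ioo_subset.mp hev
  have hb' : (-1 : ℝ) < b := hb
  set f : ℝ → ℝ := fun z => ∫ x in (-1 : ℝ)..z, 1 / H x with hf
  set g : ℝ → ℝ := fun z => (1 + z) / H z with hg
  set g' : ℝ → ℝ := fun z => (1 / H z) * (1 - (1 + z) * H' z / H z) with hg'
  -- derivatives
  have hff' : ∀ z ∈ Set.Ioo (-1 : ℝ) b, HasDerivAt f (1 / H z) z := by
    intro z hz
    apply intervalIntegral.integral_hasDerivAt_right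
    · exact (intervalIntegrable_iff_integrableOn_Ioc_of_le hz.1.le).mpr (hint z hz.1)
    · exact hOneDivCont.stronglyMeasurableAtFilter isOpen_Ioi z hz.1
    · exact (hOneDivCont z hz.1).continuousAt (Ioi_mem_nhds hz.1)
  have hgg' : ∀ z ∈ Set.Ioo (-1 : ℝ) b, HasDerivAt g (g' z) z := by
    intro z hz
    have h1 : HasDerivAt (fun z : ℝ => 1 + z) 1 z := by
      simpa using (hasDerivAt_id z).const_add 1
    have hne : H z ≠ 0 := ne_of_gt (hHpos z hz.1)
    have h2 := h1.div (hHderiv z hz.1) hne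
    have h3 : (1 * H z - (1 + z) * H' z) / H z ^ 2 = g' z := by
      have hs : (1 : ℝ) - (1 + z) * H' z / H z = (H z - (1 + z) * H' z) / H z := by
        rw [sub_div, div_self hne]
      rw [hg', one_mul]
      show (H z - (1 + z) * H' z) / H z ^ 2 = 1 / H z * (1 - (1 + z) * H' z / H z)
      rw [hs, div_mul_div_comm, one_mul, ← pow_two]
    rwa [h3] at h2
  have hg'pos : ∀ z ∈ Set.Ioo (-1 : ℝ) b, 0 < g' z := by
    intro z hz
    have hH := hHpos z hz.1
    have h1 : (1 + z) * H' z / H z < 1 := hsub hz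
    have h2 : (1 + z) * H' z / H z < 1 := h1
    have h3 : 0 < 1 - (1 + z) * H' z / H z := by linarith
    exact mul_pos (by positivity) h3
  have hg'ne : ∀ z ∈ Set.Ioo (-1 : ℝ) b, g' z ≠ 0 := fun z hz => ne_of_gt (hg'pos z hz)
  -- f → 0
  have hfa : Tendsto f (nhdsWithin (-1) (Set.Ioi (-1 : ℝ))) (nhds 0) := by
    have hIcc : IntegrableOn (fun x => 1 / H x) (Set.uIcc (-1 : ℝ) b) := by
      rw [Set.uIcc_of_le hb'.le, integrableOn_Icc_iff_integrableOn_Ioc]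
      exact hint b hb'
    have hcont := intervalIntegral.continuousOn_primitive_interval hIcc
    have hmem : (-1 : ℝ) ∈ Set.uIcc (-1 : ℝ) b := Set.left_mem_uIcc
    have := (hcont (-1) hmem).tendsto
    rw [intervalIntegral.integral_same] at this
    have hle : nhdsWithin (-1) (Set.Ioi (-1 : ℝ)) ≤ nhdsWithin (-1) (Set.uIcc (-1 : ℝ) b) := by
      rw [← nhdsWithin_Ioo_eq_nhdsGT hb']
      exact nhdsWithin_mono _ (Set.uIcc_of_le hb'.le ▸ Set.Ioo_subset_Icc_self)
    exact this.mono_left hle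
  -- g → 0
  have hga : Tendsto g (nhdsWithin (-1) (Set.Ioi (-1 : ℝ))) (nhds 0) := by
    have := hHratio.inv_tendsto_atTop
    refine this.congr (fun z => ?_)
    simp [hg, inv_div]
  -- f'/g' → 2/(2-m)
  have hdiv : Tendsto (fun z => (1 / H z) / g' z) (nhdsWithin (-1) (Set.Ioi (-1 : ℝ)))
      (nhds (2 / (2 - m))) := by
    have key : Tendsto (fun z => (1 - (1 + z) * H' z / H z)⁻¹)
        (nhdsWithin (-1) (Set.Ioi (-1 : ℝ))) (nhds ((1 - m / 2)⁻¹)) := by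
      apply Tendsto.inv₀ (tendsto_const_nhds.sub hlog)
      intro h; rw [sub_eq_zero] at h; linarith [h]
    have heq : (1 - m / 2)⁻¹ = 2 / (2 - m) := by
      have h2 : (1 : ℝ) - m / 2 = (2 - m) / 2 := by ring
      rw [h2, inv_div]
    rw [heq] at key
    refine key.congr' ?_
    filter_upwards [self_mem_nhdsWithin] with z hz
    have hH := hHpos z hz
    have hHne : (1 : ℝ) / H z ≠ 0 := by positivity
    rw [hg']
    exact (div_mul_cancel_left₀ hHne _).symm
  have hlhop := HasDerivAt.lhopital_zero_right_on_Ioo hb' hff' hgg' hg'ne hfa hga hdiv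
  have hmain : Tendsto (fun z => He z * H z) (nhdsWithin (-1) (Set.Ioi (-1 : ℝ)))
      (nhds (2 / (2 - m))) := by
    refine hlhop.congr' ?_
    filter_upwards [self_mem_nhdsWithin] with z hz
    have hzle : (-1 : ℝ) ≤ z := le_of_lt hz
    show (∫ x in (-1 : ℝ)..z, 1 / H x) / ((1 + z) / H z) = He z * H z
    rw [hHe z, intervalIntegral.integral_of_le hzle, div_div_eq_mul_div, div_eq_mul_inv]
    ring
  refine ⟨hmain, ?_⟩
  have := hmain.sub_const 1
  have h2m : (2 : ℝ) - m ≠ 0 := by linarith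
  have heq : 2 / (2 - m) - 1 = m / (2 - m) := by
    field_simp
    ring
  rwa [heq] at this
end

section
/- Let m > 2 and let H : ℝ → ℝ be differentiable and strictly positive on (-1, ∞), suppose x ↦ 1/H(x) is integrable on (z, ∞) for every z > -1 but not integrable on (-1, b] for any b > -1, suppose H(z)/(1+z) tends to 0 as z → -1⁺, and suppose that (1+z)·H'(z)/H(z) tends to m/2 as z → -1⁺. Define H_p(z) = (1+z)⁻¹ ∫_z^∞ dx/H(x). Then the recession velocity of the particle horizon H_p(z)·H(z) tends to 2/(m-2) as z → -1⁺; equivalently, the particle horizon velocity dH_p/dt = H_p(z)H(z) + 1 tends to m/(m-2) at the far future. -/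
open MeasureTheory Filter Set


/-- L'Hôpital ∞/∞, right-limit version, with negative divisor derivative. -/
lemma lhopital_atTop_aux (a : ℝ) (F G F' G' : ℝ → ℝ) (L : ℝ)
    (hF : ∀ z ∈ Ioi a, HasDerivAt F (F' z) z)
    (hG : ∀ z ∈ Ioi a, HasDerivAt G (G' z) z)
    (hG'neg : ∀ᶠ z in nhdsWithin a (Ioi a), G' z < 0)
    (hGtop : Tendsto G (nhdsWithin a (Ioi a)) atTop)
    (hratio : Tendsto (fun z => F' z / G' z) (nhdsWithin a (Ioi a)) (nhds L)) :
    Tendsto (fun z => F z / G z) (nhdsWithin a (Ioi a)) (nhds L) := by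
  rw [Metric.tendsto_nhds]
  intro ε hε
  have hε2 : 0 < ε / 2 := by linarith
  have h1 : ∀ᶠ z in nhdsWithin a (Ioi a), |F' z / G' z - L| < ε / 2 := by
    have := hratio.eventually (Metric.ball_mem_nhds L hε2)
    simpa [Real.dist_eq] using this
  have h2 : {z | G' z < 0 ∧ |F' z / G' z - L| < ε / 2} ∈ nhdsWithin a (Ioi a) :=
    (hG'neg.and h1)
  obtain ⟨u, hu, huS⟩ := mem_nhdsGT_iff_exists_Ioo_subset.1 h2
  set b := (a + u) / 2 with hb
  have hab : a < b := by simp only [hb]; simp at hu; linarith [hu]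
  have hbu : b < u := by simp only [hb]; simp at hu; linarith [hu]
  have hbS : b ∈ Ioo a u := ⟨hab, hbu⟩
  -- key estimate constant
  set C := |F b| + (|L| + ε / 2) * |G b| with hC
  have hC0 : 0 ≤ C := by positivity
  -- eventual facts about z
  have hev : ∀ᶠ z in nhdsWithin a (Ioi a),
      z ∈ Ioo a b ∧ C / (ε / 2) < G z ∧ 0 < G z := by
    have e1 : ∀ᶠ z in nhdsWithin a (Ioi a), z ∈ Ioo a b := by
      have : Ioo a b ∈ nhdsWithin a (Ioi a) :=
        mem_nhdsGT_iff_exists_Ioo_subset.2 ⟨b, hab, subset_rfl⟩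
      exact this
    have e2 := hGtop.eventually_gt_atTop (C / (ε / 2))
    have e3 := hGtop.eventually_gt_atTop (0 : ℝ)
    filter_upwards [e1, e2, e3] with z h1 h2 h3 using ⟨h1, h2, h3⟩
  filter_upwards [hev] with z hz
  obtain ⟨⟨haz, hzb⟩, hGbig, hGpos⟩ := hz
  -- MVT facts on [z, b]
  have hsub : Icc z b ⊆ Ioi a := fun x hx => lt_of_lt_of_le haz hx.1
  have hsub2 : Ioo z b ⊆ Ioo a u := fun x hx => ⟨lt_trans haz hx.1, lt_trans hx.2 hbu⟩
  have hGc : ContinuousOn G (Icc z b) := fun x hx =>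
    ((hG x (hsub hx)).continuousAt).continuousWithinAt
  have hFc : ContinuousOn F (Icc z b) := fun x hx =>
    ((hF x (hsub hx)).continuousAt).continuousWithinAt
  have hGd : ∀ x ∈ Ioo z b, HasDerivAt G (G' x) x := fun x hx =>
    hG x (hsub (Ioo_subset_Icc_self hx))
  have hFd : ∀ x ∈ Ioo z b, HasDerivAt F (F' x) x := fun x hx =>
    hF x (hsub (Ioo_subset_Icc_self hx))
  -- G z > G b
  have hGzb : G b < G z := by
    obtain ⟨c, hc, hceq⟩ := exists_hasDerivAt_eq_slope G G' hzb hGc hGd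
    have hcS := huS (hsub2 hc)
    have hlt : (G b - G z) / (b - z) < 0 := hceq ▸ hcS.1
    have hbz : 0 < b - z := by linarith
    have h4 := mul_neg_of_neg_of_pos hlt hbz
    rw [div_mul_cancel₀ _ (ne_of_gt hbz)] at h4
    linarith
  have hGne : G z - G b ≠ 0 := by linarith
  -- Cauchy MVT
  obtain ⟨c, hc, hceq⟩ := exists_ratio_hasDerivAt_eq_ratio_slope F F' hzb hFc hFd G G' hGc hGd
  have hcS := huS (hsub2 hc)
  have hG'ne : G' c ≠ 0 := ne_of_lt hcS.1
  set Q := (F z - F b) / (G z - G b) with hQ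
  have hQeq : Q = F' c / G' c := by
    rw [hQ, div_eq_div_iff hGne hG'ne]
    linarith [hceq]
  have hQL : |Q - L| < ε / 2 := hQeq ▸ hcS.2
  have hQabs : |Q| ≤ |L| + ε / 2 := by
    have := abs_sub_abs_le_abs_sub Q L
    linarith [hQL]
  -- decomposition
  have hGzne : G z ≠ 0 := ne_of_gt hGpos
  have hdecomp : F z / G z = Q + (F b - Q * G b) / G z := by
    have h1 : Q * (G z - G b) = F z - F b := div_mul_cancel₀ _ hGne
    field_simp
    nlinarith [h1]
  have hbound : |F b - Q * G b| ≤ C := by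
    calc |F b - Q * G b| ≤ |F b| + |Q * G b| := abs_sub _ _
      _ ≤ |F b| + (|L| + ε / 2) * |G b| := by
          rw [abs_mul]; gcongr
      _ = C := rfl
  have hsmall : |(F b - Q * G b) / G z| < ε / 2 := by
    rw [abs_div, abs_of_pos hGpos]
    calc |F b - Q * G b| / G z ≤ C / G z := by gcongr
      _ < ε / 2 := by
          rw [div_lt_iff₀ hGpos]
          have := (div_lt_iff₀ hε2).1 hGbig
          linarith
  rw [Real.dist_eq, hdecomp]
  calc |Q + (F b - Q * G b) / G z - L| ≤ |Q - L| + |(F b - Q * G b) / G z| := by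
        have := abs_add_le (Q - L) ((F b - Q * G b) / G z)
        simpa [add_sub_right_comm] using this
    _ < ε / 2 + ε / 2 := by linarith
    _ = ε := by ring

/-- Recession velocity of the particle horizon at the far future, case `m > 2`:
if `∫_{-1}^b dx/H(x)` diverges for every `b > -1`, `H(z)/(1+z) → 0` and
`(1+z)H'(z)/H(z) → m/2` as `z → -1⁺`, then `H_p(z)·H(z) → 2/(m-2)` as `z → -1⁺`;
equivalently, the particle horizon velocity `dH_p/dt = H_p·H + 1 → m/(m-2)`
at the far future. -/
theorem particleHorizon_velocity_far_future
    (m : ℝ) (hm : 2 < m)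
    (H H' : ℝ → ℝ)
    (hHderiv : ∀ z ∈ Set.Ioi (-1 : ℝ), HasDerivAt H (H' z) z)
    (hHpos : ∀ x ∈ Set.Ioi (-1 : ℝ), 0 < H x)
    (hint : ∀ z : ℝ, -1 < z → IntegrableOn (fun x => 1 / H x) (Set.Ioi z))
    (hdiv : ∀ b : ℝ, -1 < b → ¬ IntegrableOn (fun x => 1 / H x) (Set.Ioc (-1) b))
    (hHratio : Tendsto (fun z => H z / (1 + z)) (nhdsWithin (-1) (Set.Ioi (-1))) (nhds 0))
    (hlog : Tendsto (fun z => (1 + z) * H' z / H z)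
      (nhdsWithin (-1) (Set.Ioi (-1))) (nhds (m / 2)))
    (Hp : ℝ → ℝ)
    (hHp : ∀ z : ℝ, Hp z = (1 + z)⁻¹ * ∫ x in Set.Ioi z, 1 / H x) :
    Tendsto (fun z => Hp z * H z) (nhdsWithin (-1) (Set.Ioi (-1))) (nhds (2 / (m - 2))) ∧
    Tendsto (fun z => Hp z * H z + 1) (nhdsWithin (-1) (Set.Ioi (-1))) (nhds (m / (m - 2))) := by
  set F : ℝ → ℝ := fun z => ∫ x in Set.Ioi z, 1 / H x with hF
  set G : ℝ → ℝ := fun z => (1 + z) / H z with hG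
  set F' : ℝ → ℝ := fun z => -(1 / H z) with hF'
  set G'f : ℝ → ℝ := fun z => (H z - (1 + z) * H' z) / (H z) ^ 2 with hG'f
  have hne : ∀ z ∈ Set.Ioi (-1 : ℝ), H z ≠ 0 := fun z hz => ne_of_gt (hHpos z hz)
  have h1z : ∀ z ∈ Set.Ioi (-1 : ℝ), (0 : ℝ) < 1 + z := fun z hz => by
    simp only [Set.mem_Ioi] at hz; linarith
  have hcont : ∀ z ∈ Set.Ioi (-1 : ℝ), ContinuousAt (fun x => 1 / H x) z := fun z hz =>
    continuousAt_const.div (hHderiv z hz).continuousAt (hne z hz)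
  -- splitting of the integral
  have Fsplit : ∀ a b : ℝ, -1 < a → a ≤ b →
      F a = (∫ x in a..b, 1 / H x) + F b := by
    intro a b ha hab
    have hIab : IntegrableOn (fun x => 1 / H x) (Set.Ioc a b) :=
      (hint a ha).mono_set Set.Ioc_subset_Ioi_self
    have hIb : IntegrableOn (fun x => 1 / H x) (Set.Ioi b) :=
      hint b (lt_of_lt_of_le ha hab)
    rw [intervalIntegral.integral_of_le hab]
    show (∫ x in Set.Ioi a, 1 / H x) = _
    rw [← Set.Ioc_union_Ioi_eq_Ioi hab,
      setIntegral_union (Set.Ioc_disjoint_Ioi le_rfl) measurableSet_Ioi hIab hIb]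
  -- derivative of F
  have hFderiv : ∀ z ∈ Set.Ioi (-1 : ℝ), HasDerivAt F (F' z) z := by
    intro z hz
    have hmeas : StronglyMeasurableAtFilter (fun x => 1 / H x) (nhds z) volume :=
      ContinuousAt.stronglyMeasurableAtFilter isOpen_Ioi hcont z hz
    have hd : HasDerivAt (fun y => ∫ t in z..y, 1 / H t) (1 / H z) z :=
      intervalIntegral.integral_hasDerivAt_right IntervalIntegrable.refl hmeas (hcont z hz)
    have hd2 : HasDerivAt (fun y => F z - ∫ t in z..y, 1 / H t) (-(1 / H z)) z :=
      hd.const_sub (F z)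
    refine HasDerivAt.congr_of_eventuallyEq hd2 ?_
    filter_upwards [isOpen_Ioi.mem_nhds hz] with y hy
    rcases le_or_gt z y with hle | hlt
    · have := Fsplit z y hz hle
      linarith
    · have := Fsplit y z hy (le_of_lt hlt)
      rw [intervalIntegral.integral_symm]
      linarith
  -- derivative of G
  have hGderiv : ∀ z ∈ Set.Ioi (-1 : ℝ), HasDerivAt G (G'f z) z := by
    intro z hz
    have h1 : HasDerivAt (fun y : ℝ => 1 + y) 1 z := by
      simpa using (hasDerivAt_id z).const_add (1 : ℝ)
    have := h1.div (hHderiv z hz) (hne z hz)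
    refine this.congr_deriv ?_
    simp only [hG'f]
    ring
  -- G' negative near -1
  have hgt1 : ∀ᶠ z in nhdsWithin (-1 : ℝ) (Set.Ioi (-1)),
      1 < (1 + z) * H' z / H z :=
    hlog.eventually (eventually_gt_nhds (by linarith))
  have hG'neg : ∀ᶠ z in nhdsWithin (-1 : ℝ) (Set.Ioi (-1)), G'f z < 0 := by
    filter_upwards [hgt1, self_mem_nhdsWithin] with z hr hz
    have hp := hHpos z hz
    have hnum : H z - (1 + z) * H' z < 0 := by
      have := (one_lt_div hp).1 hr
      linarith
    exact div_neg_of_neg_of_pos hnum (by positivity)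
  -- G tends to +∞
  have hGtop : Tendsto G (nhdsWithin (-1 : ℝ) (Set.Ioi (-1))) atTop := by
    have h0 : Tendsto (fun z => H z / (1 + z)) (nhdsWithin (-1 : ℝ) (Set.Ioi (-1)))
        (nhdsWithin 0 (Set.Ioi 0)) := by
      rw [tendsto_nhdsWithin_iff]
      refine ⟨hHratio, ?_⟩
      filter_upwards [self_mem_nhdsWithin] with z hz
      exact div_pos (hHpos z hz) (h1z z hz)
    have := h0.inv_tendsto_nhdsGT_zero
    refine this.congr fun z => ?_
    simp [hG, inv_div]
  -- ratio of derivatives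
  have hm2 : m - 2 ≠ 0 := by linarith
  have hratio : Tendsto (fun z => F' z / G'f z) (nhdsWithin (-1 : ℝ) (Set.Ioi (-1)))
      (nhds (2 / (m - 2))) := by
    have key : Tendsto (fun z => ((1 + z) * H' z / H z - 1)⁻¹)
        (nhdsWithin (-1 : ℝ) (Set.Ioi (-1))) (nhds ((m / 2 - 1)⁻¹)) :=
      (hlog.sub tendsto_const_nhds).inv₀ (by intro h; rw [sub_eq_zero] at h; linarith)
    have heq : (m / 2 - 1)⁻¹ = 2 / (m - 2) := by
      rw [show m / 2 - 1 = (m - 2) / 2 by ring, inv_div]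
    rw [← heq]
    refine Tendsto.congr' ?_ key
    filter_upwards [self_mem_nhdsWithin] with z hz
    have hHne := hne z hz
    by_cases hr1 : (1 + z) * H' z / H z = 1
    · have h3 : (1 + z) * H' z = H z := by
        field_simp at hr1; linarith
      have h2 : G'f z = 0 := by simp [hG'f, h3]
      simp [hF', h2, hr1]
    · have hnum : H z - (1 + z) * H' z ≠ 0 := by
        intro h
        apply hr1
        have : (1 + z) * H' z = H z := by linarith
        rw [this, div_self hHne]
      have hden : (1 + z) * H' z / H z - 1 ≠ 0 := by
        intro h
        rw [sub_eq_zero] at h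
        exact hr1 h
      have hnum3 : (1 + z) * H' z - H z ≠ 0 := fun h => hnum (by linarith)
      have e1 : (1 + z) * H' z / H z - 1 = ((1 + z) * H' z - H z) / H z := by
        rw [sub_div, div_self hHne]
      simp only [hF', hG'f]
      rw [e1, inv_div, div_div_eq_mul_div, div_eq_div_iff hnum3 hnum]
      field_simp
      ring
  -- apply L'Hopital
  have main : Tendsto (fun z => F z / G z) (nhdsWithin (-1 : ℝ) (Set.Ioi (-1)))
      (nhds (2 / (m - 2))) :=
    lhopital_atTop_aux (-1) F G F' G'f (2 / (m - 2)) hFderiv hGderiv hG'neg hGtop hratio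
  have heq : ∀ᶠ z in nhdsWithin (-1 : ℝ) (Set.Ioi (-1)), F z / G z = Hp z * H z := by
    filter_upwards [self_mem_nhdsWithin] with z hz
    rw [hHp z]
    have hHne := hne z hz
    have h1 : (1 : ℝ) + z ≠ 0 := ne_of_gt (h1z z hz)
    simp only [hG, hF]
    field_simp
  have t1 : Tendsto (fun z => Hp z * H z) (nhdsWithin (-1 : ℝ) (Set.Ioi (-1)))
      (nhds (2 / (m - 2))) := main.congr' heq
  refine ⟨t1, ?_⟩
  have := t1.add (tendsto_const_nhds (x := (1 : ℝ)))
  convert this using 2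
  field_simp
  ring
end
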